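/- Let φ : Γ → ℂ be a function with φ(e) = 1. Suppose π is a unitary representation of G = Γ≀𝔖∞ on a complex Hilbert space H with a cyclic unit vector ξ such that ⟨π(sγ)ξ, ξ⟩ = φ_sp(sγ) = ∏_k φ(γ_k) for all s ∈ 𝔖∞ and γ ∈ Γ^∞_e. Then the subspace H^𝔖 = {η ∈ H : π(s)η = η for all s ∈ 𝔖∞} is one-dimensional, equal to ℂ·ξ; moreover π is irreducible: every bounded operator on H commuting with all π(g), g ∈ G, is a scalar multiple of the identity. -/

import Mathlib

open scoped Classical ComplexOrder
open Filter Topology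

noncomputable section

namespace DN

local notation "⟪" x ", " y "⟫" => @inner ℂ _ _ x y

/-- The group `𝔖∞` of finitely supported permutations of `ℕ`. -/
def SInf : Subgroup (Equiv.Perm ℕ) where
  carrier := {s | {i | s i ≠ i}.Finite}
  one_mem' := by simp
  mul_mem' := by
    intro s t hs ht
    refine Set.Finite.subset (hs.union ht) fun i hi => ?_
    simp only [Set.mem_setOf_eq, Set.mem_union, Equiv.Perm.mul_apply] at hi ⊢
    by_contra h
    push_neg at h
    rw [h.2, h.1] at hi
    exact hi rfl
  inv_mem' := by
    intro s hs
    refine Set.Finite.subset hs fun i hi => ?_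
    simp only [Set.mem_setOf_eq] at hi ⊢
    intro h
    exact hi (Equiv.Perm.inv_eq_iff_eq.mpr h.symm)

theorem mem_SInf (s : Equiv.Perm ℕ) : s ∈ SInf ↔ {i | s i ≠ i}.Finite := Iff.rfl

/-- The group `Γ^∞_e` of finitely supported sequences in `Γ`. -/
def GammaE (Γ : Type*) [Group Γ] : Subgroup (ℕ → Γ) where
  carrier := {γ | {i | γ i ≠ 1}.Finite}
  one_mem' := by simp
  mul_mem' := by
    intro f g hf hg
    refine Set.Finite.subset (hf.union hg) fun i hi => ?_
    simp only [Set.mem_setOf_eq, Set.mem_union, Pi.mul_apply] at hi ⊢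
    by_contra h
    push_neg at h
    rw [h.1, h.2] at hi
    exact hi (one_mul 1)
  inv_mem' := by
    intro f hf
    refine Set.Finite.subset hf fun i hi => ?_
    simp only [Set.mem_setOf_eq, Pi.inv_apply, ne_eq, inv_eq_one] at hi ⊢
    exact hi

theorem mem_GammaE {Γ : Type*} [Group Γ] (γ : ℕ → Γ) :
    γ ∈ GammaE Γ ↔ {i | γ i ≠ 1}.Finite := Iff.rfl

/-- The permutation action of `Equiv.Perm ℕ` on `ℕ → Γ`. -/
def permMulAut (Γ : Type*) [Group Γ] (s : Equiv.Perm ℕ) : MulAut (ℕ → Γ) where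
  toFun γ := γ ∘ s.symm
  invFun γ := γ ∘ s
  left_inv γ := by funext i; simp [Function.comp]
  right_inv γ := by funext i; simp [Function.comp]
  map_mul' γ δ := rfl

def permAction (Γ : Type*) [Group Γ] : Equiv.Perm ℕ →* MulAut (ℕ → Γ) where
  toFun := permMulAut Γ
  map_one' := by ext γ i; rfl
  map_mul' s t := by ext γ i; rfl

/-- The (big) wreath product `(ℕ → Γ) ⋊ Perm ℕ`. -/
abbrev W (Γ : Type*) [Group Γ] := (ℕ → Γ) ⋊[permAction Γ] Equiv.Perm ℕ

/-- The wreath product `G = Γ ≀ 𝔖∞`, as the subgroup of `W Γ` of finitely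
supported elements. -/
def WG (Γ : Type*) [Group Γ] : Subgroup (W Γ) where
  carrier := {g | {i | g.right i ≠ i}.Finite ∧ {i | g.left i ≠ 1}.Finite}
  one_mem' := by
    constructor
    · convert Set.finite_empty using 1
      ext i; simp
    · convert Set.finite_empty using 1
      ext i; simp
  mul_mem' := by
    rintro a b ⟨ha1, ha2⟩ ⟨hb1, hb2⟩
    constructor
    · refine Set.Finite.subset (ha1.union hb1) fun i hi => ?_
      simp only [Set.mem_setOf_eq, Set.mem_union, SemidirectProduct.mul_right,
        Equiv.Perm.mul_apply] at hi ⊢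
      by_contra h
      push_neg at h
      rw [h.2, h.1] at hi
      exact hi rfl
    · refine Set.Finite.subset (ha2.union (hb2.image a.right)) fun i hi => ?_
      simp only [Set.mem_setOf_eq, SemidirectProduct.mul_left, Pi.mul_apply] at hi
      by_contra h
      simp only [Set.mem_union, Set.mem_setOf_eq, Set.mem_image, not_or, not_exists,
        not_and, not_not] at h
      obtain ⟨h1, h2⟩ := h
      apply hi
      have hb : b.left (a.right⁻¹ i) = 1 := by
        by_contra hc
        exact h2 (a.right⁻¹ i) hc (by simp)
      have hrfl : (permAction Γ a.right b.left) i = b.left (a.right⁻¹ i) := rfl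
      rw [h1, one_mul, hrfl, hb]
  inv_mem' := by
    rintro a ⟨ha1, ha2⟩
    constructor
    · refine Set.Finite.subset ha1 fun i hi => ?_
      simp only [Set.mem_setOf_eq, SemidirectProduct.inv_right] at hi ⊢
      intro h
      exact hi (Equiv.Perm.inv_eq_iff_eq.mpr h.symm)
    · refine Set.Finite.subset (Set.Finite.preimage (a.right.injective.injOn) ha2)
        fun i hi => ?_
      simp only [Set.mem_setOf_eq] at hi
      simp only [Set.mem_preimage, Set.mem_setOf_eq]
      intro h
      apply hi
      have hrfl : (a⁻¹).left i = (a.left (a.right i))⁻¹ := rfl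
      rw [hrfl, h, inv_one]

theorem mem_WG {Γ : Type*} [Group Γ] (g : W Γ) :
    g ∈ WG Γ ↔ {i | g.right i ≠ i}.Finite ∧ {i | g.left i ≠ 1}.Finite := Iff.rfl

/-- The canonical copy of `𝔖∞` inside `Γ ≀ 𝔖∞`. -/
def permW {Γ : Type*} [Group Γ] (s : SInf) : WG Γ :=
  ⟨SemidirectProduct.inr s.1, by
    rw [mem_WG]
    constructor
    · have h : (SemidirectProduct.inr s.1 : W Γ).right = s.1 := SemidirectProduct.right_inr _
      rw [h]
      exact s.2
    · convert Set.finite_empty using 1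
      ext i; simp⟩

/-- The canonical copy of `Γ^∞_e` inside `Γ ≀ 𝔖∞`. -/
def seqW {Γ : Type*} [Group Γ] (γ : GammaE Γ) : WG Γ :=
  ⟨SemidirectProduct.inl γ.1, by
    rw [mem_WG]
    constructor
    · convert Set.finite_empty using 1
      ext i; simp
    · have h : (SemidirectProduct.inl γ.1 : W Γ).left = γ.1 := SemidirectProduct.left_inl _
      rw [h]
      exact γ.2⟩

/-- The support of an element of `Γ ≀ 𝔖∞`. -/
def supp {Γ : Type*} [Group Γ] (g : WG Γ) : Set ℕ :=
  {i | (g : W Γ).right i ≠ i ∨ (g : W Γ).left i ≠ 1}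

/-- Positive definiteness of a function on a group. -/
def IsPosDef {G : Type*} [Group G] (φ : G → ℂ) : Prop :=
  ∀ (m : ℕ) (g : Fin m → G) (c : Fin m → ℂ),
    0 ≤ ∑ i, ∑ j, c i * (starRingEnd ℂ) (c j) * φ ((g j)⁻¹ * g i)

/-- A state on a group: normalized positive definite function. -/
def IsState {G : Type*} [Group G] (φ : G → ℂ) : Prop := φ 1 = 1 ∧ IsPosDef φ

/-- `𝔖∞`-centrality of a function on `Γ ≀ 𝔖∞`. -/
def IsSCentral {Γ : Type*} [Group Γ] (φ : WG Γ → ℂ) : Prop :=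
  ∀ (s : SInf) (g : WG Γ), φ (permW s * g * (permW s)⁻¹) = φ g

/-- The commutant of a set of bounded operators. -/
def commutant {H : Type*} [NormedAddCommGroup H] [InnerProductSpace ℂ H]
    (S : Set (H →L[ℂ] H)) : Set (H →L[ℂ] H) := {T | ∀ A ∈ S, T * A = A * T}

variable {Γ : Type*} [Group Γ]
variable {H : Type*} [NormedAddCommGroup H] [InnerProductSpace ℂ H] [CompleteSpace H]

/-- The image set `π(G)` of a representation. -/
def repSet (π : WG Γ →* (H →L[ℂ] H)) : Set (H →L[ℂ] H) := Set.range fun g : WG Γ => π g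

/-- The von Neumann algebra `π(G)''` (double commutant). -/
def vN (π : WG Γ →* (H →L[ℂ] H)) : Set (H →L[ℂ] H) := commutant (commutant (repSet π))

/-- The representation is factorial: the center `π(G)' ∩ π(G)''` consists of scalars. -/
def IsFactorial (π : WG Γ →* (H →L[ℂ] H)) : Prop :=
  ∀ T ∈ commutant (repSet π) ∩ vN π, ∃ c : ℂ, T = c • (1 : H →L[ℂ] H)

/-- `(π, H, ξ)` is a GNS triple for `φ`. -/
structure IsGNS (φ : WG Γ → ℂ) (π : WG Γ →* (H →L[ℂ] H)) (ξ : H) : Prop where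
  unitary : ∀ g, π g ∈ unitary (H →L[ℂ] H)
  norm_one : ‖ξ‖ = 1
  cyclic : Dense ((Submodule.span ℂ (Set.range fun g : WG Γ => π g ξ) : Submodule ℂ H) : Set H)
  inner_eq : ∀ g, φ g = ⟪ξ, π g ξ⟫

theorem swap_mem_SInf (a b : ℕ) : Equiv.swap a b ∈ SInf := by
  rw [mem_SInf]
  refine Set.Finite.subset ((Set.finite_singleton a).insert b) fun i hi => ?_
  simp only [Set.mem_setOf_eq] at hi
  simp only [Set.mem_insert_iff, Set.mem_singleton_iff]
  by_contra h
  push_neg at h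
  exact hi (Equiv.swap_apply_of_ne_of_ne h.2 h.1)

/-- The transposition `(a b)` as an element of `Γ ≀ 𝔖∞`. -/
def swapW {Γ : Type*} [Group Γ] (a b : ℕ) : WG Γ := permW ⟨Equiv.swap a b, swap_mem_SInf a b⟩

def omegaFun (n i : ℕ) : ℕ := if i < n then i + n else if i < 2 * n then i - n else i

theorem omegaFun_invol (n i : ℕ) : omegaFun n (omegaFun n i) = i := by
  unfold omegaFun
  split_ifs <;> first | contradiction | omega

/-- Olshanski's permutation `ω_n`. -/
def omegaPerm (n : ℕ) : Equiv.Perm ℕ :=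
  ⟨omegaFun n, omegaFun n, omegaFun_invol n, omegaFun_invol n⟩

theorem omegaPerm_mem (n : ℕ) : omegaPerm n ∈ SInf := by
  rw [mem_SInf]
  refine Set.Finite.subset (Set.finite_Iio (2 * n)) fun i hi => ?_
  simp only [Set.mem_setOf_eq] at hi
  simp only [Set.mem_Iio]
  by_contra h
  push_neg at h
  apply hi
  show omegaFun n i = i
  unfold omegaFun
  split_ifs <;> first | contradiction | omega

/-- `ω_n` as an element of `Γ ≀ 𝔖∞`. -/
def omegaW {Γ : Type*} [Group Γ] (n : ℕ) : WG Γ := permW ⟨omegaPerm n, omegaPerm_mem n⟩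

def sigmaFun (n i : ℕ) : ℕ := if i + 1 < n then i + 1 else if i + 1 = n then 0 else i

def sigmaInvFun (n i : ℕ) : ℕ := if i < n then (if i = 0 then n - 1 else i - 1) else i

theorem sigma_left_inv (n i : ℕ) : sigmaInvFun n (sigmaFun n i) = i := by
  unfold sigmaFun sigmaInvFun
  split_ifs <;> first | contradiction | omega

theorem sigma_right_inv (n i : ℕ) : sigmaFun n (sigmaInvFun n i) = i := by
  unfold sigmaFun sigmaInvFun
  split_ifs <;> first | contradiction | omega

/-- The cycle `σ_n = (0 1 2 ... n-1)`. -/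
def sigmaPerm (n : ℕ) : Equiv.Perm ℕ :=
  ⟨sigmaFun n, sigmaInvFun n, sigma_left_inv n, sigma_right_inv n⟩

theorem sigmaPerm_mem (n : ℕ) : sigmaPerm n ∈ SInf := by
  rw [mem_SInf]
  refine Set.Finite.subset (Set.finite_Iio n) fun i hi => ?_
  simp only [Set.mem_setOf_eq] at hi
  simp only [Set.mem_Iio]
  by_contra h
  push_neg at h
  apply hi
  show sigmaFun n i = i
  unfold sigmaFun
  split_ifs <;> first | contradiction | omega

/-- The cycle of `s` through the point `i` (the paper's `s_p` for the orbit `p` of `i`). -/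
def cycleAt (s : Equiv.Perm ℕ) (i : ℕ) : Equiv.Perm ℕ where
  toFun j := if s.SameCycle i j then s j else j
  invFun j := if s.SameCycle i j then s⁻¹ j else j
  left_inv j := by
    by_cases h : s.SameCycle i j
    · have h2 : s.SameCycle i (s j) := Equiv.Perm.sameCycle_apply_right.mpr h
      simp [h, h2]
    · simp [h]
  right_inv j := by
    by_cases h : s.SameCycle i j
    · have h2 : s.SameCycle i (s⁻¹ j) := Equiv.Perm.sameCycle_symm_apply_right.mpr h
      simp [h, h2]
    · simp [h]

theorem cycleAt_mem {s : Equiv.Perm ℕ} (hs : s ∈ SInf) (i : ℕ) : cycleAt s i ∈ SInf := by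
  rw [mem_SInf] at hs ⊢
  refine Set.Finite.subset hs fun j hj => ?_
  simp only [Set.mem_setOf_eq] at hj ⊢
  intro h
  apply hj
  show (if s.SameCycle i j then s j else j) = j
  split_ifs with hc
  · exact h
  · rfl

/-- The generalized cycle of `g = sγ` corresponding to the orbit of `i` under `s`. -/
def genCycle {Γ : Type*} [Group Γ] (g : WG Γ) (i : ℕ) : WG Γ :=
  permW ⟨cycleAt (g : W Γ).right i, cycleAt_mem g.2.1 i⟩ *
  seqW ⟨fun k => if ((g : W Γ).right).SameCycle i k then (g : W Γ).left ((g : W Γ).right k)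
      else 1, by
    rw [mem_GammaE]
    refine Set.Finite.subset (Set.Finite.preimage ((g : W Γ).right.injective.injOn) g.2.2)
      fun k hk => ?_
    simp only [Set.mem_setOf_eq] at hk
    simp only [Set.mem_preimage, Set.mem_setOf_eq]
    by_cases hsc : ((g : W Γ).right).SameCycle i k
    · rw [if_pos hsc] at hk; exact hk
    · rw [if_neg hsc] at hk; exact absurd rfl hk⟩

/-- The von Neumann algebra `𝔄_j` generated by `O_j` and the `π(γ)` with `γ` supported at `j`. -/
def Aj (π : WG Γ →* (H →L[ℂ] H)) (O : H →L[ℂ] H) (j : ℕ) : Set (H →L[ℂ] H) :=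
  commutant (commutant
    ({O} ∪ {T | ∃ γ : GammaE Γ, (∀ i, i ≠ j → (γ : ℕ → Γ) i = 1) ∧ T = π (seqW γ)}))

/-! ### Auxiliary material for `statement_2` -/

theorem permAction_apply {Γ : Type*} [Group Γ] (s : Equiv.Perm ℕ) (γ : ℕ → Γ) (i : ℕ) :
    permAction Γ s γ i = γ (s⁻¹ i) := rfl

theorem coe_permW {Γ : Type*} [Group Γ] (s : SInf) :
    ((permW s : WG Γ) : W Γ) = SemidirectProduct.inr s.1 := rfl

theorem permW_inv {Γ : Type*} [Group Γ] (s : SInf) :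
    (permW s : WG Γ)⁻¹ = permW s⁻¹ := by
  apply Subtype.ext
  show ((permW s : WG Γ) : W Γ)⁻¹ = ((permW (Γ := Γ) s⁻¹ : WG Γ) : W Γ)
  rw [coe_permW, coe_permW, ← map_inv]
  rfl

theorem supp_finite {Γ : Type*} [Group Γ] (g : WG Γ) : (supp g).Finite :=
  Set.Finite.subset (g.2.1.union g.2.2) fun _ hi => hi

theorem supp_inv_subset {Γ : Type*} [Group Γ] (g : WG Γ) : supp g⁻¹ ⊆ supp g := by
  intro i hi
  have hr : ((g⁻¹ : WG Γ) : W Γ).right = ((g : W Γ).right)⁻¹ := rfl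
  have hl : ∀ k, ((g⁻¹ : WG Γ) : W Γ).left k
      = ((g : W Γ).left ((g : W Γ).right k))⁻¹ := by
    intro k
    show permAction Γ ((g : W Γ).right)⁻¹ ((g : W Γ).left)⁻¹ k = _
    rw [permAction_apply]
    simp
  rcases hi with h | h
  · rw [hr] at h
    refine Or.inl fun he => h ?_
    exact Equiv.Perm.inv_eq_iff_eq.mpr he.symm
  · rw [hl] at h
    have h' : (g : W Γ).left ((g : W Γ).right i) ≠ 1 := by simpa using h
    by_cases he : (g : W Γ).right i = i
    · exact Or.inr (by rwa [he] at h')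
    · exact Or.inl he

theorem mul_left_of_disjoint {Γ : Type*} [Group Γ] {g h : WG Γ}
    (hd : Disjoint (supp g) (supp h)) (k : ℕ) :
    ((g * h : WG Γ) : W Γ).left k = (g : W Γ).left k * (h : W Γ).left k := by
  have hmul : ((g * h : WG Γ) : W Γ).left k
      = (g : W Γ).left k * (h : W Γ).left (((g : W Γ).right)⁻¹ k) := by
    show ((g : W Γ) * (h : W Γ)).left k = _
    rw [SemidirectProduct.mul_left]
    rfl
  rw [hmul]
  by_cases hk : k ∈ supp g
  · have h1 : (h : W Γ).left k = 1 := by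
      by_contra hc
      exact Set.disjoint_left.mp hd hk (Or.inr hc)
    have h2 : (h : W Γ).left (((g : W Γ).right)⁻¹ k) = 1 := by
      by_cases he : ((g : W Γ).right)⁻¹ k = k
      · rw [he, h1]
      · have hmem : ((g : W Γ).right)⁻¹ k ∈ supp g := by
          refine Or.inl ?_
          rw [Equiv.Perm.coe_inv, Equiv.apply_symm_apply]
          exact Ne.symm he
        by_contra hc
        exact Set.disjoint_left.mp hd hmem (Or.inr hc)
    rw [h1, h2]
  · have h1 : (g : W Γ).left k = 1 := by
      by_contra hc; exact hk (Or.inr hc)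
    have hrk : (g : W Γ).right k = k := by
      by_contra hc; exact hk (Or.inl hc)
    have h2 : ((g : W Γ).right)⁻¹ k = k := by
      conv_lhs => rw [← hrk]
      rw [Equiv.Perm.coe_inv, Equiv.symm_apply_apply]
    rw [h1, h2, one_mul]

theorem conj_right {Γ : Type*} [Group Γ] (s : SInf) (g : WG Γ) :
    ((permW s * g * (permW s)⁻¹ : WG Γ) : W Γ).right
      = s.1 * (g : W Γ).right * s.1⁻¹ := by
  rw [permW_inv]
  show (SemidirectProduct.inr s.1 * (g : W Γ) * SemidirectProduct.inr (s.1⁻¹)).right = _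
  simp

theorem conj_left {Γ : Type*} [Group Γ] (s : SInf) (g : WG Γ) (k : ℕ) :
    ((permW s * g * (permW s)⁻¹ : WG Γ) : W Γ).left k = (g : W Γ).left (s.1⁻¹ k) := by
  rw [permW_inv]
  show (SemidirectProduct.inr s.1 * (g : W Γ) * SemidirectProduct.inr (s.1⁻¹)).left k = _
  rw [SemidirectProduct.mul_left, SemidirectProduct.mul_left]
  simp [permAction_apply]

theorem decompW {Γ : Type*} [Group Γ] (g : WG Γ) :
    ∃ (s : SInf) (γ : GammaE Γ), g = permW s * seqW γ ∧
      ∀ k, (γ : ℕ → Γ) k = (g : W Γ).left ((g : W Γ).right k) := by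
  refine ⟨⟨(g : W Γ).right, g.2.1⟩,
    ⟨fun k => (g : W Γ).left ((g : W Γ).right k), ?_⟩, ?_, fun k => rfl⟩
  · rw [mem_GammaE]
    exact Set.Finite.preimage ((g : W Γ).right.injective.injOn) g.2.2
  · apply Subtype.ext
    show (g : W Γ) = SemidirectProduct.inr (g : W Γ).right *
      SemidirectProduct.inl (fun k => (g : W Γ).left ((g : W Γ).right k))
    ext i
    · rw [SemidirectProduct.mul_left]
      simp [permAction_apply]
    · rw [SemidirectProduct.mul_right]
      simp

def shiftFun (N n i : ℕ) : ℕ :=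
  if i < N then i + n * N else if n * N ≤ i ∧ i < n * N + N then i - n * N else i

theorem shiftFun_aux (N n : ℕ) : n * N = 0 ∨ N ≤ n * N := by
  rcases Nat.eq_zero_or_pos n with h' | h'
  · left; simp [h']
  · right; exact Nat.le_mul_of_pos_left N h'

theorem shiftFun_invol (N n i : ℕ) : shiftFun N n (shiftFun N n i) = i := by
  unfold shiftFun
  have h2 := shiftFun_aux N n
  split_ifs <;> omega

def shiftPerm (N n : ℕ) : Equiv.Perm ℕ :=
  ⟨shiftFun N n, shiftFun N n, shiftFun_invol N n, shiftFun_invol N n⟩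

theorem shiftPerm_mem (N n : ℕ) : shiftPerm N n ∈ SInf := by
  rw [mem_SInf]
  refine Set.Finite.subset (Set.finite_Iio (n * N + N)) fun i hi => ?_
  simp only [Set.mem_setOf_eq] at hi
  simp only [Set.mem_Iio]
  by_contra hcon
  push_neg at hcon
  apply hi
  show shiftFun N n i = i
  unfold shiftFun
  have h2 := shiftFun_aux N n
  split_ifs <;> omega

theorem statement_2 {Γ : Type*} [Group Γ] {H : Type*} [NormedAddCommGroup H]
    [InnerProductSpace ℂ H] [CompleteSpace H]
    (φ : Γ → ℂ) (hφone : φ 1 = 1)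
    (π : WG Γ →* (H →L[ℂ] H)) (ξ : H)
    (hunit : ∀ g, π g ∈ unitary (H →L[ℂ] H))
    (hnorm : ‖ξ‖ = 1)
    (hcyclic :
      Dense ((Submodule.span ℂ (Set.range fun g : WG Γ => π g ξ) : Submodule ℂ H) : Set H))
    (hrep : ∀ (s : SInf) (γ : GammaE Γ),
      ⟪ξ, π (permW s * seqW γ) ξ⟫ = ∏ᶠ k, φ ((γ : ℕ → Γ) k)) :
    {η : H | ∀ s : SInf, π (permW s) η = η} = (Submodule.span ℂ ({ξ} : Set H) : Set H) ∧
    ∀ T : H →L[ℂ] H, (∀ g : WG Γ, T * π g = π g * T) →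
      ∃ c : ℂ, T = c • (1 : H →L[ℂ] H) := by
  classical
  -- consequences of unitarity
  have hinner : ∀ (g : WG Γ) (x y : H), ⟪π g x, π g y⟫ = ⟪x, y⟫ := fun g x y =>
    ContinuousLinearMap.inner_map_map_of_mem_unitary (hunit g) x y
  have hnormmap : ∀ (g : WG Γ) (x : H), ‖π g x‖ = ‖x‖ := fun g x =>
    ContinuousLinearMap.norm_map_of_mem_unitary (hunit g) x
  -- the inner product formula for general elements
  have hΦ : ∀ g : WG Γ, ⟪ξ, π g ξ⟫ = ∏ᶠ k, φ ((g : W Γ).left k) := by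
    intro g
    obtain ⟨s, γ, hg, hγ⟩ := decompW g
    rw [hg, hrep s γ]
    have h1 : ∀ k, φ ((γ : ℕ → Γ) k) = φ (((g : W Γ)).left ((g : W Γ).right k)) := fun k => by
      rw [hγ k]
    rw [finprod_congr h1]
    have := finprod_comp_equiv ((g : W Γ).right) (f := fun k => φ ((g : W Γ).left k))
    rw [hg] at this ⊢
    exact this
  -- mulSupport finiteness
  have hms : ∀ g : WG Γ, (Function.mulSupport fun k => φ ((g : W Γ).left k)).Finite := by
    intro g
    refine Set.Finite.subset g.2.2 fun k hk => ?_
    simp only [Function.mem_mulSupport] at hk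
    simp only [Set.mem_setOf_eq]
    intro h1
    exact hk (by rw [h1, hφone])
  -- multiplicativity on disjointly supported elements
  have hmulinner : ∀ g h : WG Γ, Disjoint (supp g) (supp h) →
      ⟪ξ, π (g * h) ξ⟫ = ⟪ξ, π g ξ⟫ * ⟪ξ, π h ξ⟫ := by
    intro g h hd
    rw [hΦ, hΦ, hΦ]
    have he : ∀ k, φ (((g * h : WG Γ) : W Γ).left k)
        = φ ((g : W Γ).left k) * φ ((h : W Γ).left k) := by
      intro k
      rw [mul_left_of_disjoint hd]
      by_cases h1 : (g : W Γ).left k = 1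
      · rw [h1, one_mul, hφone, one_mul]
      · have h2 : (h : W Γ).left k = 1 := by
          by_contra hc
          exact Set.disjoint_left.mp hd (Or.inr h1) (Or.inr hc)
        rw [h2, mul_one, hφone, mul_one]
    rw [finprod_congr he]
    exact finprod_mul_distrib (hms g) (hms h)
  -- ξ is 𝔖∞-invariant
  have hfix : ∀ s : SInf, π (permW s) ξ = ξ := by
    intro s
    have h1 : ⟪ξ, π (permW s) ξ⟫ = 1 := by
      rw [hΦ]
      have h2 : ∀ k, φ (((permW s : WG Γ) : W Γ).left k) = 1 := by
        intro k
        rw [coe_permW]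
        simp [hφone]
      rw [finprod_congr h2, finprod_one]
    exact ((inner_eq_one_iff_of_norm_eq_one hnorm (by rw [hnormmap]; exact hnorm)).mp h1).symm
  -- inner products against 𝔖∞-invariant vectors
  have hfixInner : ∀ (η : H), (∀ s : SInf, π (permW s) η = η) →
      ∀ (s : SInf) (x : H), ⟪η, π (permW s) x⟫ = ⟪η, x⟫ := by
    intro η hη s x
    have hη' : π ((permW s)⁻¹) η = η := by rw [permW_inv]; exact hη _
    calc ⟪η, π (permW s) x⟫ = ⟪π (permW s) (π ((permW s)⁻¹) η), π (permW s) x⟫ := by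
          rw [← ContinuousLinearMap.mul_apply, ← map_mul, mul_inv_cancel, map_one,
            ContinuousLinearMap.one_apply]
      _ = ⟪π ((permW s)⁻¹) η, x⟫ := hinner _ _ _
      _ = ⟪η, x⟫ := by rw [hη']
  -- conjugation formula
  have hconj : ∀ x : WG Γ, ⟪ξ, π x⁻¹ ξ⟫ = (starRingEnd ℂ) ⟪ξ, π x ξ⟫ := by
    intro x
    calc ⟪ξ, π x⁻¹ ξ⟫ = ⟪π x ξ, π x (π x⁻¹ ξ)⟫ := (hinner x _ _).symm
      _ = ⟪π x ξ, ξ⟫ := by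
          rw [← ContinuousLinearMap.mul_apply, ← map_mul, mul_inv_cancel, map_one,
            ContinuousLinearMap.one_apply]
      _ = (starRingEnd ℂ) ⟪ξ, π x ξ⟫ := (inner_conj_symm _ _).symm
  have hshift : ∀ x y : WG Γ, ⟪π x ξ, π y ξ⟫ = ⟪ξ, π (x⁻¹ * y) ξ⟫ := by
    intro x y
    have h1 : π x (π (x⁻¹ * y) ξ) = π y ξ := by
      rw [← ContinuousLinearMap.mul_apply, ← map_mul, mul_inv_cancel_left]
    rw [← h1, hinner]
  have hxixi : ⟪ξ, ξ⟫ = (1 : ℂ) := by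
    rw [inner_self_eq_norm_sq_to_K, hnorm]
    norm_num
  -- Main claim: matrix coefficients against invariant vectors factorize
  have claimA : ∀ η : H, (∀ s : SInf, π (permW s) η = η) →
      ∀ g : WG Γ, ⟪η, π g ξ⟫ = ⟪ξ, π g ξ⟫ * ⟪η, ξ⟫ := by
    intro η hη g
    obtain ⟨N₀, hN₀⟩ := (supp_finite g).bddAbove
    set N : ℕ := N₀ + 1 with hN
    have hsuppN : supp g ⊆ Set.Iio N := fun i hi => Nat.lt_succ_of_le (hN₀ hi)
    set sP : ℕ → SInf := fun n => ⟨shiftPerm N n, shiftPerm_mem N n⟩ with hsP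
    set Gn : ℕ → WG Γ := fun n => permW (sP n) * g * (permW (sP n))⁻¹ with hGn
    -- support estimates
    have hsuppG : ∀ n, supp (Gn n) ⊆ Set.Ico (n * N) (n * N + N) := by
      intro n i hi
      have hmem : ((sP n).1)⁻¹ i ∈ supp g := by
        rcases hi with h | h
        · rw [conj_right] at h
          by_cases he : (g : W Γ).right (((sP n).1)⁻¹ i) = ((sP n).1)⁻¹ i
          · exfalso
            apply h
            show (sP n).1 ((g : W Γ).right (((sP n).1)⁻¹ i)) = i
            rw [he, Equiv.Perm.coe_inv, Equiv.apply_symm_apply]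
          · exact Or.inl he
        · rw [conj_left] at h
          exact Or.inr h
      have hlt : ((sP n).1)⁻¹ i < N := hsuppN hmem
      have hi2 : i = (sP n).1 (((sP n).1)⁻¹ i) := (Equiv.apply_symm_apply _ _).symm
      have hv : (sP n).1 (((sP n).1)⁻¹ i) = ((sP n).1)⁻¹ i + n * N := by
        show shiftFun N n _ = _
        unfold shiftFun
        rw [if_pos hlt]
      rw [Set.mem_Ico, hi2, hv]
      omega
    have hdisj : ∀ {n m : ℕ}, n ≠ m → Disjoint (supp (Gn n)) (supp (Gn m)) := by
      intro n m hnm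
      refine Set.disjoint_left.mpr fun i hin him => ?_
      have h1 := hsuppG n hin
      have h2 := hsuppG m him
      rw [Set.mem_Ico] at h1 h2
      rcases Nat.lt_or_ge n m with h | h
      · have h3 : (n + 1) * N ≤ m * N := mul_le_mul_left (Nat.succ_le_of_lt h) N
        have h4 : (n + 1) * N = n * N + N := by ring
        omega
      · have h' : m < n := lt_of_le_of_ne h (Ne.symm hnm)
        have h3 : (m + 1) * N ≤ n * N := mul_le_mul_left (Nat.succ_le_of_lt h') N
        have h4 : (m + 1) * N = m * N + N := by ring
        omega
    set a : ℂ := ⟪ξ, π g ξ⟫ with ha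
    have hηv : ∀ n, ⟪η, π (Gn n) ξ⟫ = ⟪η, π g ξ⟫ := by
      intro n
      have h1 : π ((permW (sP n))⁻¹) ξ = ξ := by rw [permW_inv]; exact hfix _
      calc ⟪η, π (Gn n) ξ⟫ = ⟪η, π (permW (sP n)) (π g (π ((permW (sP n))⁻¹) ξ))⟫ := by
            simp only [hGn, map_mul, ContinuousLinearMap.mul_apply]
        _ = ⟪η, π g ξ⟫ := by rw [h1, hfixInner η hη]
    have hξv : ∀ n, ⟪ξ, π (Gn n) ξ⟫ = a := by
      intro n
      have h1 : π ((permW (sP n))⁻¹) ξ = ξ := by rw [permW_inv]; exact hfix _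
      calc ⟪ξ, π (Gn n) ξ⟫ = ⟪ξ, π (permW (sP n)) (π g (π ((permW (sP n))⁻¹) ξ))⟫ := by
            simp only [hGn, map_mul, ContinuousLinearMap.mul_apply]
        _ = ⟪ξ, π g ξ⟫ := by rw [h1, hfixInner ξ hfix]
    have hvξ : ∀ n, ⟪π (Gn n) ξ, ξ⟫ = (starRingEnd ℂ) a := by
      intro n
      rw [← inner_conj_symm, hξv]
    have hvv : ∀ n m, n ≠ m → ⟪π (Gn n) ξ, π (Gn m) ξ⟫ = (starRingEnd ℂ) a * a := by
      intro n m hnm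
      have e1 : ⟪π (Gn n) ξ, π (Gn m) ξ⟫ = ⟪ξ, π ((Gn n)⁻¹ * Gn m) ξ⟫ := hshift _ _
      rw [e1, hmulinner _ _ ((hdisj hnm).mono_left (supp_inv_subset _)), hconj,
        hξv n, hξv m]
    have hnormv : ∀ n, ‖π (Gn n) ξ‖ = 1 := fun n => (hnormmap _ _).trans hnorm
    have hA : ‖a‖ ≤ 1 := by
      rw [ha]
      calc ‖⟪ξ, π g ξ⟫‖ ≤ ‖ξ‖ * ‖π g ξ‖ := norm_inner_le_norm _ _
        _ = 1 := by rw [hnorm, hnormmap, hnorm, one_mul]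
    set u : ℕ → H := fun n => π (Gn n) ξ - a • ξ with hudef
    have huu : ∀ n m, n ≠ m → ⟪u n, u m⟫ = 0 := by
      intro n m hnm
      simp only [hudef, inner_sub_left, inner_sub_right, inner_smul_left, inner_smul_right]
      rw [hvv n m hnm, hξv m, hvξ n, hxixi]
      ring
    have hunorm : ∀ n, ‖u n‖ ≤ 2 := by
      intro n
      calc ‖π (Gn n) ξ - a • ξ‖ ≤ ‖π (Gn n) ξ‖ + ‖a • ξ‖ := norm_sub_le _ _
        _ = 1 + ‖a‖ * ‖ξ‖ := by rw [hnormv, norm_smul]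
        _ ≤ 2 := by rw [hnorm]; linarith
    set d : ℂ := ⟪η, π g ξ⟫ - a * ⟪η, ξ⟫ with hddef
    have hηu : ∀ n, ⟪η, u n⟫ = d := by
      intro n
      simp only [hudef, inner_sub_right, inner_smul_right]
      rw [hηv n, hddef]
    have hd0 : d = 0 := by
      by_contra hd
      have hdpos : 0 < ‖d‖ := norm_pos_iff.mpr hd
      obtain ⟨M₁, hM₁⟩ := exists_nat_gt (4 * ‖η‖ ^ 2 / ‖d‖ ^ 2)
      set M : ℕ := M₁ + 1 with hM
      have hMgt : 4 * ‖η‖ ^ 2 / ‖d‖ ^ 2 < (M : ℝ) :=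
        lt_trans hM₁ (by exact_mod_cast Nat.lt_succ_self M₁)
      have hM0 : (0 : ℝ) < M := by positivity
      set S : H := ∑ n ∈ Finset.range M, u n with hSdef
      have hinnS : ⟪η, S⟫ = (M : ℂ) * d := by
        rw [hSdef, inner_sum]
        simp [hηu, Finset.sum_const, Finset.card_range]
      have hSS : (⟪S, S⟫ : ℂ) = ∑ n ∈ Finset.range M, ⟪u n, u n⟫ := by
        rw [hSdef, sum_inner]
        refine Finset.sum_congr rfl fun n hn => ?_
        rw [inner_sum, Finset.sum_eq_single n (fun m _ hmn => huu n m (Ne.symm hmn))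
          (fun hnotin => absurd hn hnotin)]
      have hnormS2 : ‖S‖ ^ 2 ≤ 4 * M := by
        have h1 : (‖S‖ ^ 2 : ℝ) = ∑ n ∈ Finset.range M, ‖u n‖ ^ 2 := by
          have h2 := hSS
          rw [inner_self_eq_norm_sq_to_K] at h2
          have h3 : ∀ n ∈ Finset.range M, (⟪u n, u n⟫ : ℂ) = ((‖u n‖ : ℂ)) ^ 2 :=
            fun n _ => inner_self_eq_norm_sq_to_K _
          rw [Finset.sum_congr rfl h3] at h2
          have h4 : ((‖S‖ ^ 2 : ℝ) : ℂ) = ((∑ n ∈ Finset.range M, ‖u n‖ ^ 2 : ℝ) : ℂ) := by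
            push_cast
            exact h2
          exact_mod_cast h4
        rw [h1]
        calc ∑ n ∈ Finset.range M, ‖u n‖ ^ 2 ≤ ∑ _n ∈ Finset.range M, (4 : ℝ) :=
              Finset.sum_le_sum fun n _ => by nlinarith [hunorm n, norm_nonneg (u n)]
          _ = 4 * M := by simp [mul_comm]
      have hCS : ‖⟪η, S⟫‖ ≤ ‖η‖ * ‖S‖ := norm_inner_le_norm _ _
      have h2 : (M : ℝ) * ‖d‖ ≤ ‖η‖ * ‖S‖ := by
        rw [hinnS] at hCS
        calc (M : ℝ) * ‖d‖ = ‖(M : ℂ) * d‖ := by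
              rw [norm_mul]
              norm_num
          _ ≤ ‖η‖ * ‖S‖ := hCS
      have hsq : ((M : ℝ) * ‖d‖) ^ 2 ≤ (‖η‖ * ‖S‖) ^ 2 :=
        pow_le_pow_left₀ (by positivity) h2 2
      have h4 : (M : ℝ) ^ 2 * ‖d‖ ^ 2 ≤ ‖η‖ ^ 2 * (4 * M) := by
        have h5 : (‖η‖ * ‖S‖) ^ 2 = ‖η‖ ^ 2 * ‖S‖ ^ 2 := by ring
        have h6 : ‖η‖ ^ 2 * ‖S‖ ^ 2 ≤ ‖η‖ ^ 2 * (4 * M) :=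
          mul_le_mul_of_nonneg_left hnormS2 (sq_nonneg _)
        nlinarith [hsq]
      have h5 : 4 * ‖η‖ ^ 2 < (M : ℝ) * ‖d‖ ^ 2 := by
        rw [div_lt_iff₀ (by positivity)] at hMgt
        linarith
      have h7 : (M : ℝ) ^ 2 * ‖d‖ ^ 2 = M * (M * ‖d‖ ^ 2) := by ring
      have h8 : (M : ℝ) * (4 * ‖η‖ ^ 2) < M * (M * ‖d‖ ^ 2) :=
        mul_lt_mul_of_pos_left h5 hM0
      have h9 : ‖η‖ ^ 2 * (4 * M) = (M : ℝ) * (4 * ‖η‖ ^ 2) := by ring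
      linarith [h4, h7, h8, h9]
    rw [← sub_eq_zero]
    rw [hddef] at hd0
    rw [← hd0, ha]
  -- Part 1: the invariant vectors are the multiples of ξ
  have hspan : {η : H | ∀ s : SInf, π (permW s) η = η}
      = ((Submodule.span ℂ ({ξ} : Set H) : Submodule ℂ H) : Set H) := by
    ext η
    simp only [Set.mem_setOf_eq, SetLike.mem_coe]
    constructor
    · intro hη
      have hζ : η - ⟪ξ, η⟫ • ξ = 0 := by
        have hkey : ∀ g : WG Γ, ⟪η - ⟪ξ, η⟫ • ξ, π g ξ⟫ = 0 := by
          intro g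
          rw [inner_sub_left, inner_smul_left, claimA η hη g, inner_conj_symm]
          ring
        have horth : ∀ x ∈ Submodule.span ℂ (Set.range fun g : WG Γ => π g ξ),
            ⟪η - ⟪ξ, η⟫ • ξ, x⟫ = 0 := by
          intro x hx
          induction hx using Submodule.span_induction with
          | mem x hx =>
            obtain ⟨g, rfl⟩ := hx
            exact hkey g
          | zero => simp
          | add x y _ _ hx hy => rw [inner_add_right, hx, hy, add_zero]
          | smul c x _ hx => rw [inner_smul_right, hx, mul_zero]
        exact hcyclic.eq_zero_of_inner_left (𝕜 := ℂ) fun v hv => horth v hv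
      have hη2 : η = ⟪ξ, η⟫ • ξ := by
        rw [← sub_eq_zero]
        exact hζ
      rw [hη2]
      exact Submodule.smul_mem _ _ (Submodule.mem_span_singleton_self ξ)
    · intro hη
      obtain ⟨c, hc⟩ := Submodule.mem_span_singleton.mp hη
      intro s
      rw [← hc, ContinuousLinearMap.map_smul, hfix]
  refine ⟨hspan, ?_⟩
  -- Part 2: irreducibility
  intro T hT
  have hTξ : T ξ ∈ {η : H | ∀ s : SInf, π (permW s) η = η} := by
    intro s
    have h1 := congrArg (fun A : H →L[ℂ] H => A ξ) (hT (permW s))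
    simp only [ContinuousLinearMap.mul_apply] at h1
    rw [← h1, hfix]
  rw [hspan] at hTξ
  obtain ⟨c, hc⟩ := Submodule.mem_span_singleton.mp hTξ
  refine ⟨c, ?_⟩
  have hEq : Set.EqOn (⇑T) (⇑(c • (1 : H →L[ℂ] H)))
      ((Submodule.span ℂ (Set.range fun g : WG Γ => π g ξ) : Submodule ℂ H) : Set H) := by
    intro x hx
    simp only [ContinuousLinearMap.smul_apply, ContinuousLinearMap.one_apply]
    induction hx using Submodule.span_induction with
    | mem x hx =>
      obtain ⟨g, rfl⟩ := hx
      have h1 := congrArg (fun A : H →L[ℂ] H => A ξ) (hT g)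
      simp only [ContinuousLinearMap.mul_apply] at h1
      rw [h1, ← hc, ContinuousLinearMap.map_smul]
    | zero => simp
    | add x y _ _ hx hy => rw [map_add, hx, hy, smul_add]
    | smul c' x _ hx => rw [ContinuousLinearMap.map_smul, hx, smul_comm]
  have hfin := Continuous.ext_on hcyclic T.continuous (c • (1 : H →L[ℂ] H)).continuous hEq
  exact ContinuousLinearMap.ext fun x => congrFun hfin x


end DN
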